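/- Let π ∈ S_{NC}(m,n) be an annular non-crossing permutation all of whose cycles have at least 2 elements, and suppose γ_{m,n}π^{-1} has no fixed points. Then all cycles of π and all cycles of γ_{m,n}π^{-1} have exactly 2 elements, and m = n. -/

import Mathlib

/-- The minimal number of transpositions needed to write `π` as a product of transpositions. -/
noncomputable def transLength {N : ℕ} (π : Equiv.Perm (Fin N)) : ℕ :=
  sInf {k | ∃ l : List (Equiv.Perm (Fin N)),
    (∀ τ ∈ l, τ.IsSwap) ∧ l.prod = π ∧ l.length = k}

/-- The permutation `γ_{m,n} = (1,…,m)(m+1,…,m+n)` of `{1,…,m+n}`. -/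
def gammaMN (m n : ℕ) : Equiv.Perm (Fin (m + n)) :=
  finSumFinEquiv.permCongr ((finRotate m).sumCongr (finRotate n))

/-- `π` is `(m,n)`-connected: `π` and `γ_{m,n}` generate a transitive subgroup. -/
def Connected {m n : ℕ} (π : Equiv.Perm (Fin (m + n))) : Prop :=
  ∀ x y : Fin (m + n),
    ∃ g ∈ Subgroup.closure ({π, gammaMN m n} : Set (Equiv.Perm (Fin (m + n)))), g x = y

open Equiv Equiv.Perm Finset
open Fin.NatCast

section aux

variable {β : Type*} [DecidableEq β]

lemma aux_mem_le_foldr (s : List (Finset β)) (t : Finset β) (ht : t ∈ s) :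
    t ≤ s.foldr (· ⊔ ·) ⊥ := by
  induction s with
  | nil => simp at ht
  | cons a s ih =>
    rcases List.mem_cons.1 ht with h | h
    · subst h; exact le_sup_left
    · exact le_trans (ih h) le_sup_right

lemma aux_foldr_card_le (s : List (Finset β)) :
    (s.foldr (· ⊔ ·) ⊥).card ≤ (s.map Finset.card).sum := by
  induction s with
  | nil => simp
  | cons a s ih =>
    simp only [List.foldr_cons, List.map_cons, List.sum_cons]
    have h2 : (a ⊔ s.foldr (· ⊔ ·) ⊥).card ≤ a.card + (s.foldr (· ⊔ ·) ⊥).card := by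
      rw [Finset.sup_eq_union]
      exact Finset.card_union_le _ _
    omega

lemma aux_pairwise_disjoint (s : List (Finset β))
    (h : (s.map Finset.card).sum ≤ (s.foldr (· ⊔ ·) ⊥).card) :
    s.Pairwise fun a b => _root_.Disjoint a b := by
  induction s with
  | nil => simp
  | cons a s ih =>
    simp only [List.foldr_cons, List.map_cons, List.sum_cons] at h
    set F := s.foldr (· ⊔ ·) ⊥ with hF
    have h1 : F.card ≤ (s.map Finset.card).sum := aux_foldr_card_le s
    have h2 : (a ⊔ F).card ≤ a.card + F.card := by
      rw [Finset.sup_eq_union]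
      exact Finset.card_union_le _ _
    have h3 : (a ∪ F).card + (a ∩ F).card = a.card + F.card :=
      Finset.card_union_add_card_inter a F
    have h4 : a ⊔ F = a ∪ F := by rw [Finset.sup_eq_union]
    rw [h4] at h h2
    have hdisj : _root_.Disjoint a F := by
      rw [Finset.disjoint_iff_inter_eq_empty, ← Finset.card_eq_zero]
      omega
    refine List.Pairwise.cons ?_ (ih (by omega))
    intro b hb
    exact hdisj.mono_right (aux_mem_le_foldr s b hb)

end aux

lemma aux_prod_sq_eq_one {α : Type*} {l : List (Equiv.Perm α)}
    (hsq : ∀ τ ∈ l, τ * τ = 1) (hp : l.Pairwise Equiv.Perm.Disjoint) :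
    l.prod * l.prod = 1 := by
  induction l with
  | nil => simp
  | cons τ l ih =>
    rw [List.pairwise_cons] at hp
    have hc : Commute τ l.prod :=
      Commute.list_prod_right _ _ fun x hx => (hp.1 x hx).commute
    have key : (τ * l.prod) * (τ * l.prod) = (τ * τ) * (l.prod * l.prod) := by
      rw [mul_assoc τ l.prod (τ * l.prod), ← mul_assoc l.prod τ l.prod, ← hc.eq,
        mul_assoc τ l.prod l.prod, ← mul_assoc τ τ (l.prod * l.prod)]
    rw [List.prod_cons, key, hsq τ List.mem_cons_self,
      ih (fun x hx => hsq x (List.mem_cons_of_mem _ hx)) hp.2, one_mul]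

lemma aux_exists_min_list {N : ℕ} (π : Equiv.Perm (Fin N)) :
    ∃ l : List (Equiv.Perm (Fin N)),
      (∀ τ ∈ l, τ.IsSwap) ∧ l.prod = π ∧ l.length = transLength π := by
  have hne : {k | ∃ l : List (Equiv.Perm (Fin N)),
      (∀ τ ∈ l, τ.IsSwap) ∧ l.prod = π ∧ l.length = k}.Nonempty := by
    obtain ⟨l, hl, hs⟩ := (Equiv.Perm.truncSwapFactors π).out
    exact ⟨l.length, l, hs, hl, rfl⟩
  exact Nat.sInf_mem hne

lemma aux_sum_supports {N : ℕ} (l : List (Equiv.Perm (Fin N)))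
    (hsw : ∀ τ ∈ l, τ.IsSwap) :
    ((l.map Equiv.Perm.support).map Finset.card).sum = 2 * l.length := by
  induction l with
  | nil => simp
  | cons τ l ih =>
    obtain ⟨x, y, hxy, rfl⟩ := hsw τ List.mem_cons_self
    simp only [List.map_cons, List.sum_cons, List.length_cons,
      ih (fun x hx => hsw x (List.mem_cons_of_mem _ hx)),
      Equiv.Perm.card_support_swap hxy]
    ring

lemma aux_support_univ {N : ℕ} (π : Equiv.Perm (Fin N)) (hfp : ∀ i, π i ≠ i) :
    π.support = Finset.univ :=
  Finset.eq_univ_iff_forall.2 fun x => Equiv.Perm.mem_support.2 (hfp x)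

lemma aux_le_two_transLength {N : ℕ} (π : Equiv.Perm (Fin N)) (hfp : ∀ i, π i ≠ i) :
    N ≤ 2 * transLength π := by
  obtain ⟨l, hsw, hprod, hlen⟩ := aux_exists_min_list π
  have h1 : (Finset.univ : Finset (Fin N)) ≤ (l.map Equiv.Perm.support).foldr (· ⊔ ·) ⊥ := by
    rw [← aux_support_univ π hfp, ← hprod]
    exact Equiv.Perm.support_prod_le l
  have h2 := aux_foldr_card_le (l.map Equiv.Perm.support)
  have h3 := Finset.card_le_card h1
  rw [aux_sum_supports l hsw] at h2
  simpa [Fintype.card_fin, hlen] using le_trans h3 h2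

lemma aux_involution {N : ℕ} (π : Equiv.Perm (Fin N)) (hfp : ∀ i, π i ≠ i)
    (hL : 2 * transLength π ≤ N) : π * π = 1 := by
  obtain ⟨l, hsw, hprod, hlen⟩ := aux_exists_min_list π
  have h1 : (Finset.univ : Finset (Fin N)) ≤ (l.map Equiv.Perm.support).foldr (· ⊔ ·) ⊥ := by
    rw [← aux_support_univ π hfp, ← hprod]
    exact Equiv.Perm.support_prod_le l
  have h2 := aux_foldr_card_le (l.map Equiv.Perm.support)
  have h3 := Finset.card_le_card h1
  rw [Finset.card_univ, Fintype.card_fin] at h3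
  have hsum := aux_sum_supports l hsw
  have hkey : ((l.map Equiv.Perm.support).map Finset.card).sum ≤
      ((l.map Equiv.Perm.support).foldr (· ⊔ ·) ⊥).card := by
    rw [hsum, hlen]
    omega
  have hpd := aux_pairwise_disjoint (l.map Equiv.Perm.support) hkey
  rw [List.pairwise_map] at hpd
  have hpd' : l.Pairwise Equiv.Perm.Disjoint := by
    exact hpd.imp fun h => Equiv.Perm.disjoint_iff_disjoint_support.2 h
  have hsq : ∀ τ ∈ l, τ * τ = 1 := by
    intro τ hτ
    obtain ⟨x, y, hxy, rfl⟩ := hsw τ hτ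
    exact Equiv.swap_mul_self x y
  rw [← hprod]
  exact aux_prod_sq_eq_one hsq hpd'

lemma aux_sumCongr_pow {α β : Type*} (p : Equiv.Perm α) (q : Equiv.Perm β) (k : ℕ) :
    (p.sumCongr q) ^ k = (p ^ k).sumCongr (q ^ k) := by
  induction k with
  | zero => simp [Equiv.Perm.sumCongr_one]
  | succ k ih => rw [pow_succ, pow_succ, pow_succ, ih, Equiv.Perm.sumCongr_mul]

lemma aux_finRotate_pow (m k : ℕ) (a : Fin (m + 1)) :
    ((finRotate (m + 1)) ^ k) a = a + (k : Fin (m + 1)) := by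
  induction k with
  | zero => simp
  | succ k ih =>
    rw [pow_succ', Equiv.Perm.mul_apply, ih, finRotate_succ_apply]
    push_cast
    rw [add_assoc]

lemma aux_gammaMN_pow_apply (m n k : ℕ) (x : Fin (m + n)) :
    (gammaMN m n ^ k) x =
      finSumFinEquiv ((((finRotate m).sumCongr (finRotate n)) ^ k) (finSumFinEquiv.symm x)) := by
  induction k with
  | zero => simp
  | succ k ih =>
    rw [pow_succ', Equiv.Perm.mul_apply, ih, gammaMN, Equiv.permCongr_apply,
      Equiv.symm_apply_apply, pow_succ', Equiv.Perm.mul_apply]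

lemma aux_gammaMN_fix_left {m n k : ℕ} (x : Fin (m + n)) (hx : (x : ℕ) < m) :
    (gammaMN m n ^ k) x = x ↔ m ∣ k := by
  rcases h : finSumFinEquiv.symm x with a | b
  · have hx' : finSumFinEquiv (Sum.inl a : Fin m ⊕ Fin n) = x := by
      rw [← h, Equiv.apply_symm_apply]
    match m, a with
    | m + 1, a =>
      rw [aux_gammaMN_pow_apply, h, aux_sumCongr_pow]
      simp only [Equiv.sumCongr_apply, Sum.map_inl]
      rw [aux_finRotate_pow, ← hx']
      rw [Equiv.apply_eq_iff_eq]
      constructor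
      · intro hh
        have : (k : Fin (m + 1)) = 0 := by
          have := Sum.inl.inj hh
          rwa [add_eq_left] at this
        exact (Fin.natCast_eq_zero).1 this
      · intro hdvd
        have : (k : Fin (m + 1)) = 0 := (Fin.natCast_eq_zero).2 hdvd
        rw [this, add_zero]
  · exfalso
    have hx' : finSumFinEquiv (Sum.inr b : Fin m ⊕ Fin n) = x := by
      rw [← h, Equiv.apply_symm_apply]
    have : (x : ℕ) = m + (b : ℕ) := by
      rw [← hx', finSumFinEquiv_apply_right]
      rfl
    omega

lemma aux_gammaMN_fix_right {m n k : ℕ} (x : Fin (m + n)) (hx : m ≤ (x : ℕ)) :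
    (gammaMN m n ^ k) x = x ↔ n ∣ k := by
  rcases h : finSumFinEquiv.symm x with a | b
  · exfalso
    have hx' : finSumFinEquiv (Sum.inl a : Fin m ⊕ Fin n) = x := by
      rw [← h, Equiv.apply_symm_apply]
    have : (x : ℕ) = (a : ℕ) := by
      rw [← hx', finSumFinEquiv_apply_left]
      rfl
    have := a.isLt
    omega
  · have hx' : finSumFinEquiv (Sum.inr b : Fin m ⊕ Fin n) = x := by
      rw [← h, Equiv.apply_symm_apply]
    match n, b with
    | n + 1, b =>
      rw [aux_gammaMN_pow_apply, h, aux_sumCongr_pow]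
      simp only [Equiv.sumCongr_apply, Sum.map_inr]
      rw [aux_finRotate_pow, ← hx']
      rw [Equiv.apply_eq_iff_eq]
      constructor
      · intro hh
        have : (k : Fin (n + 1)) = 0 := by
          have := Sum.inr.inj hh
          rwa [add_eq_left] at this
        exact (Fin.natCast_eq_zero).1 this
      · intro hdvd
        have : (k : Fin (n + 1)) = 0 := (Fin.natCast_eq_zero).2 hdvd
        rw [this, add_zero]

lemma aux_gammaMN_preserves {m n : ℕ} (x : Fin (m + n)) :
    ((gammaMN m n x : ℕ) < m ↔ (x : ℕ) < m) := by
  rcases h : finSumFinEquiv.symm x with a | b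
  · have hx' : finSumFinEquiv (Sum.inl a : Fin m ⊕ Fin n) = x := by
      rw [← h, Equiv.apply_symm_apply]
    have hxa : (x : ℕ) = (a : ℕ) := by
      rw [← hx', finSumFinEquiv_apply_left]; rfl
    have : gammaMN m n x = finSumFinEquiv (Sum.inl ((finRotate m) a) : Fin m ⊕ Fin n) := by
      rw [gammaMN, Equiv.permCongr_apply, h]
      rfl
    have hval : ((gammaMN m n x : ℕ)) = ((finRotate m) a : ℕ) := by
      rw [this, finSumFinEquiv_apply_left]; rfl
    have := ((finRotate m) a).isLt
    have := a.isLt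
    omega
  · have hx' : finSumFinEquiv (Sum.inr b : Fin m ⊕ Fin n) = x := by
      rw [← h, Equiv.apply_symm_apply]
    have hxb : (x : ℕ) = m + (b : ℕ) := by
      rw [← hx', finSumFinEquiv_apply_right]; rfl
    have : gammaMN m n x = finSumFinEquiv (Sum.inr ((finRotate n) b) : Fin m ⊕ Fin n) := by
      rw [gammaMN, Equiv.permCongr_apply, h]
      rfl
    have hval : ((gammaMN m n x : ℕ)) = m + ((finRotate n) b : ℕ) := by
      rw [this, finSumFinEquiv_apply_right]; rfl
    omega

lemma aux_gammaMN_sign {m n : ℕ} :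
    Equiv.Perm.sign (gammaMN m n) =
      Equiv.Perm.sign (finRotate m) * Equiv.Perm.sign (finRotate n) := by
  rw [gammaMN, Equiv.Perm.sign_permCongr, Equiv.Perm.sign_sumCongr]

theorem annular_pairing_structure {m n : ℕ} (π : Equiv.Perm (Fin (m + n)))
    (hconn : Connected π)
    (hlen : transLength π + transLength (gammaMN m n * π⁻¹) = m + n)
    (hπ : ∀ i, π i ≠ i)
    (hγπ : ∀ i, (gammaMN m n * π⁻¹) i ≠ i) :
    (∀ i, π (π i) = i) ∧
      (∀ i, (gammaMN m n * π⁻¹) ((gammaMN m n * π⁻¹) i) = i) ∧ m = n := by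
  set γ := gammaMN m n with hγdef
  set σ := γ * π⁻¹ with hσdef
  have hb1 := aux_le_two_transLength π hπ
  have hb2 := aux_le_two_transLength σ hγπ
  have hLπ : 2 * transLength π = m + n := by omega
  have hLσ : 2 * transLength σ = m + n := by omega
  have hππ : π * π = 1 := aux_involution π hπ (by omega)
  have hσσ : σ * σ = 1 := aux_involution σ hγπ (by omega)
  have hNeven : Even (m + n) := ⟨transLength π, by omega⟩
  refine ⟨fun i => ?_, fun i => ?_, ?_⟩
  · have : (π * π) i = (1 : Equiv.Perm (Fin (m + n))) i := by rw [hππ]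
    simpa using this
  · have : (σ * σ) i = (1 : Equiv.Perm (Fin (m + n))) i := by rw [hσσ]
    simpa using this
  -- now prove m = n
  · have hπinv : π⁻¹ = π := inv_eq_of_mul_eq_one_right hππ
    have hσπ : σ = γ * π := by rw [hσdef, hπinv]
    -- conjugation relation : π * γ = γ⁻¹ * π
    have hconj : π * γ = γ⁻¹ * π := by
      have h1 : (γ * π) * (γ * π) = 1 := by rw [← hσπ]; exact hσσ
      have h2 : γ * (π * γ * π) = 1 := by
        rw [← h1]; group
      have h3 : π * γ * π = γ⁻¹ := by
        have := eq_inv_of_mul_eq_one_right h2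
        rw [← this]
      have h4 : (π * γ * π) * π = γ⁻¹ * π := by rw [h3]
      rw [mul_assoc (π * γ) π π, hππ, mul_one] at h4
      exact h4
    have hconjk : ∀ k : ℕ, π * γ ^ k = (γ⁻¹) ^ k * π := by
      intro k
      induction k with
      | zero => simp
      | succ k ih =>
        rw [pow_succ, ← mul_assoc, ih, mul_assoc, hconj, ← mul_assoc, ← pow_succ]
    -- fixed points transfer
    have htrans : ∀ (k : ℕ) (x : Fin (m + n)), ((γ ^ k) (π x) = π x ↔ (γ ^ k) x = x) := by
      intro k x
      have hrel : ∀ y, π ((γ ^ k) y) = ((γ⁻¹) ^ k) (π y) := by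
        intro y
        have := congrArg (fun p : Equiv.Perm (Fin (m + n)) => p y) (hconjk k)
        simpa using this
      have hsq : ∀ y : Fin (m + n), π (π y) = y := by
        intro y
        have : (π * π) y = (1 : Equiv.Perm (Fin (m + n))) y := by rw [hππ]
        simpa using this
      have hinv_iff : ∀ y : Fin (m + n), (((γ⁻¹) ^ k) y = y ↔ (γ ^ k) y = y) := by
        intro y
        rw [inv_pow, Equiv.Perm.inv_eq_iff_eq, eq_comm]
      constructor
      · intro hfix
        have h5 : π ((γ ^ k) (π x)) = π (π x) := congrArg π hfix
        rw [hrel (π x)] at h5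
        rw [hsq x] at h5
        exact (hinv_iff x).1 h5
      · intro hfix
        have h6 : ((γ⁻¹) ^ k) x = x := by
          rw [inv_pow]
          exact Equiv.Perm.inv_eq_iff_eq.2 hfix.symm
        have h7 := hrel (π x)
        rw [hsq x, h6] at h7
        exact π.injective (by rw [h7, hsq x])
    -- sign of γ is 1
    have hsignγ : Equiv.Perm.sign γ = 1 := by
      obtain ⟨l1, hsw1, hprod1, hlen1⟩ := aux_exists_min_list π
      obtain ⟨l2, hsw2, hprod2, hlen2⟩ := aux_exists_min_list σ
      have hs1 : Equiv.Perm.sign π = (-1) ^ l1.length := by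
        rw [← hprod1]; exact Equiv.Perm.sign_prod_list_swap hsw1
      have hs2 : Equiv.Perm.sign σ = (-1) ^ l2.length := by
        rw [← hprod2]; exact Equiv.Perm.sign_prod_list_swap hsw2
      have hσπγ : σ * π = γ := by rw [hσπ, mul_assoc, hππ, mul_one]
      have : Equiv.Perm.sign γ = Equiv.Perm.sign σ * Equiv.Perm.sign π := by
        rw [← hσπγ, map_mul]
      rw [this, hs1, hs2, ← pow_add, hlen1, hlen2]
      have hevenL : Even (transLength σ + transLength π) :=
        ⟨transLength π, by omega⟩
      exact Even.neg_one_pow hevenL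
    rcases Nat.eq_zero_or_pos m with hm | hm
    · rcases Nat.eq_zero_or_pos n with hn | hn
      · omega
      · -- m = 0, n > 0 : contradiction via sign
        exfalso
        subst hm
        obtain ⟨n', rfl⟩ : ∃ n', n = n' + 1 := ⟨n - 1, by omega⟩
        have h0 : Equiv.Perm.sign (finRotate 0) = 1 := by
          have : finRotate 0 = 1 := by
            ext i
            exact absurd i.isLt (by omega)
          rw [this, map_one]
        have hsign2 : Equiv.Perm.sign γ = (-1 : ℤˣ) ^ n' := by
          rw [hγdef, aux_gammaMN_sign, h0, one_mul, sign_finRotate, Nat.add_sub_cancel]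
        have hodd : Odd n' := by
          rcases hNeven with ⟨t, ht⟩
          exact ⟨t - 1, by omega⟩
        rw [hsignγ] at hsign2
        rw [hodd.neg_one_pow] at hsign2
        exact absurd hsign2.symm (by decide)
    · rcases Nat.eq_zero_or_pos n with hn | hn
      · -- n = 0, m > 0 : contradiction via sign
        exfalso
        subst hn
        obtain ⟨m', rfl⟩ : ∃ m', m = m' + 1 := ⟨m - 1, by omega⟩
        have h0 : Equiv.Perm.sign (finRotate 0) = 1 := by
          have : finRotate 0 = 1 := by
            ext i
            exact absurd i.isLt (by omega)
          rw [this, map_one]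
        have hsign2 : Equiv.Perm.sign γ = (-1 : ℤˣ) ^ m' := by
          rw [hγdef, aux_gammaMN_sign, h0, mul_one, sign_finRotate, Nat.add_sub_cancel]
        have hodd : Odd m' := by
          rcases hNeven with ⟨t, ht⟩
          exact ⟨t - 1, by omega⟩
        rw [hsignγ] at hsign2
        rw [hodd.neg_one_pow] at hsign2
        exact absurd hsign2.symm (by decide)
      · -- m > 0, n > 0
        by_contra hmn
        -- π preserves the first block
        have hπpres : ∀ x : Fin (m + n), ((π x : ℕ) < m ↔ (x : ℕ) < m) := by
          intro x
          constructor
          · intro hπx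
            by_contra hx
            push_neg at hx
            have hiff : ∀ k : ℕ, (m ∣ k ↔ n ∣ k) := by
              intro k
              rw [← aux_gammaMN_fix_left (π x) hπx, ← hγdef, htrans k x, hγdef,
                aux_gammaMN_fix_right x hx]
            have h1 : m ∣ n := (hiff n).2 dvd_rfl
            have h2 : n ∣ m := (hiff m).1 dvd_rfl
            exact hmn (Nat.dvd_antisymm h1 h2)
          · intro hx
            by_contra hπx
            push_neg at hπx
            have hiff : ∀ k : ℕ, (n ∣ k ↔ m ∣ k) := by
              intro k
              rw [← aux_gammaMN_fix_right (π x) hπx, ← hγdef, htrans k x, hγdef,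
                aux_gammaMN_fix_left x hx]
            have h1 : n ∣ m := (hiff m).2 dvd_rfl
            have h2 : m ∣ n := (hiff n).1 dvd_rfl
            exact hmn (Nat.dvd_antisymm h2 h1)
        -- all elements of the closure preserve the first block
        have hclos : ∀ g ∈ Subgroup.closure ({π, gammaMN m n} : Set (Equiv.Perm (Fin (m + n)))),
            ∀ x : Fin (m + n), ((g x : ℕ) < m ↔ (x : ℕ) < m) := by
          intro g hg
          refine Subgroup.closure_induction (k := {π, gammaMN m n})
            (p := fun g _ => ∀ x : Fin (m + n), ((g x : ℕ) < m ↔ (x : ℕ) < m))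
            ?_ ?_ ?_ ?_ hg
          · intro u hu x
            rcases hu with hu | hu
            · subst hu; exact hπpres x
            · simp only [Set.mem_singleton_iff] at hu
              subst hu
              exact aux_gammaMN_preserves x
          · intro x; simp
          · intro u v _ _ hu hv x
            rw [Equiv.Perm.mul_apply, hu (v x), hv x]
          · intro u _ hu x
            have := hu (u⁻¹ x)
            rw [show u (u⁻¹ x) = x by simp] at this
            exact this.symm
        -- contradiction with connectivity
        obtain ⟨g, hg, hgx⟩ := hconn ⟨0, by omega⟩ ⟨m, by omega⟩
        have h9 := hclos g hg ⟨0, by omega⟩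
        simp only [hgx, Fin.val_mk] at h9
        omega
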